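/- Let SNR_d be exponential with mean γ_d and SNR_e be exponential with mean γ_e, independent. For a single transmission with secrecy rate R = 0 and dummy-message rate R₁ ≥ 0, the connection outage probability P_co = 1 - exp(-(2^{R₁} - 1)/γ_d) and the secrecy outage probability P_so = exp(-(2^{R₁} - 1)/γ_e). Then there exists R₁ ≥ 0 with P_co ≤ ξ_c and P_so ≤ ξ_s if and only if ξ_s ≥ (1 - ξ_c)^{γ_d/γ_e}, where ξ_c ∈ (0,1) and ξ_s ∈ (0,1). -/

import Mathlib

open Real

theorem single_transmission_outage_tradeoff
    (γd γe ξc ξs : ℝ) (hγd : 0 < γd) (hγe : 0 < γe)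
    (hξc : ξc ∈ Set.Ioo (0 : ℝ) 1) (hξs : ξs ∈ Set.Ioo (0 : ℝ) 1) :
    (∃ R₁ : ℝ, 0 ≤ R₁ ∧
        1 - exp (-((2 : ℝ) ^ R₁ - 1) / γd) ≤ ξc ∧
        exp (-((2 : ℝ) ^ R₁ - 1) / γe) ≤ ξs)
      ↔ ξs ≥ (1 - ξc) ^ (γd / γe) := by
  obtain ⟨hξc0, hξc1⟩ := hξc
  obtain ⟨hξs0, hξs1⟩ := hξs
  have h1c : 0 < 1 - ξc := by linarith
  constructor
  · rintro ⟨R₁, hR, hco, hso⟩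
    set t : ℝ := (2 : ℝ) ^ R₁ - 1 with ht
    have hco' : 1 - ξc ≤ exp (-t / γd) := by linarith
    have key : (1 - ξc) ^ (γd / γe) ≤ (exp (-t / γd)) ^ (γd / γe) :=
      Real.rpow_le_rpow h1c.le hco' (div_pos hγd hγe).le
    have heq : (exp (-t / γd)) ^ (γd / γe) = exp (-t / γe) := by
      rw [← Real.exp_mul]
      congr 1
      field_simp
    rw [heq] at key
    exact le_trans key hso
  · intro h
    have hlog : Real.log ξs < 0 := Real.log_neg hξs0 hξs1
    set t : ℝ := -γe * Real.log ξs with htdef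
    have htpos : 0 < t := by
      have := mul_pos hγe (neg_pos.mpr hlog)
      nlinarith
    refine ⟨Real.logb 2 (1 + t), Real.logb_nonneg (by norm_num) (by linarith), ?_, ?_⟩
    · have h2 : (2 : ℝ) ^ Real.logb 2 (1 + t) = 1 + t :=
        Real.rpow_logb (by norm_num) (by norm_num) (by linarith)
      rw [h2]
      have harg : -(1 + t - 1) / γd = Real.log ξs * (γe / γd) := by
        rw [htdef]; field_simp; ring
      rw [harg]
      have : exp (Real.log ξs * (γe / γd)) = ξs ^ (γe / γd) := by
        rw [mul_comm, ← Real.log_rpow hξs0, Real.exp_log (Real.rpow_pos_of_pos hξs0 _)]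
      rw [this]
      have hr : (1 - ξc) ^ ((γd / γe) * (γe / γd)) ≤ ξs ^ (γe / γd) := by
        rw [Real.rpow_mul h1c.le]
        exact Real.rpow_le_rpow (Real.rpow_nonneg h1c.le _) h (div_pos hγe hγd).le
      have hexp : (γd / γe) * (γe / γd) = 1 := by field_simp
      rw [hexp, Real.rpow_one] at hr
      linarith
    · have h2 : (2 : ℝ) ^ Real.logb 2 (1 + t) = 1 + t :=
        Real.rpow_logb (by norm_num) (by norm_num) (by linarith)
      rw [h2]
      have harg : -(1 + t - 1) / γe = Real.log ξs := by
        rw [htdef]; field_simp; ring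
      rw [harg, Real.exp_log hξs0]
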